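/- Let c > 0 and u* > 0, and let V : [0, u*] → ℝ be a positive C² function satisfying 2·V''(u) = c/V(u)² − 2·V(u) for all u ∈ [0, u*], with V'(0) = V'(u*) = 0 and V'(u) > 0 for all u ∈ (0, u*). Then V(0) < (c/2)^{1/3} < V(u*). -/

import Mathlib

/-- Appendix B: a positive increasing solution of
`2V'' = c/V² - 2V` on `[0, u*]` with `V'(0) = V'(u*) = 0` straddles the
equilibrium `(c/2)^{1/3}`. -/
theorem solution_straddles_equilibrium (c u_star : ℝ) (hc : 0 < c)
    (hu : 0 < u_star) (V : ℝ → ℝ)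
    (hpos : ∀ u ∈ Set.Icc (0 : ℝ) u_star, 0 < V u)
    (hC2 : ContDiffOn ℝ 2 V (Set.Icc 0 u_star))
    (hode : ∀ u ∈ Set.Icc (0 : ℝ) u_star,
      2 * derivWithin (derivWithin V (Set.Icc 0 u_star)) (Set.Icc 0 u_star) u =
        c / V u ^ 2 - 2 * V u)
    (h0 : derivWithin V (Set.Icc 0 u_star) 0 = 0)
    (h1 : derivWithin V (Set.Icc 0 u_star) u_star = 0)
    (hincr : ∀ u ∈ Set.Ioo (0 : ℝ) u_star,
      0 < derivWithin V (Set.Icc 0 u_star) u) :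
    V 0 < (c / 2) ^ ((1 : ℝ) / 3) ∧ (c / 2) ^ ((1 : ℝ) / 3) < V u_star := by
  set s : Set ℝ := Set.Icc (0 : ℝ) u_star with hs_def
  set W : ℝ → ℝ := derivWithin V s with hW_def
  have hs : UniqueDiffOn ℝ s := uniqueDiffOn_Icc hu
  have hVdiff : DifferentiableOn ℝ V s := hC2.differentiableOn (by norm_num)
  have hWcd : ContDiffOn ℝ 1 W s := hC2.derivWithin hs (by norm_num)
  have hWdiff : DifferentiableOn ℝ W s := hWcd.differentiableOn one_ne_zero
  -- Energy function
  set E : ℝ → ℝ := fun u => W u ^ 2 + c * (V u)⁻¹ + V u ^ 2 with hE_def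
  have hmem : (0 : ℝ) ∈ s := Set.left_mem_Icc.2 hu.le
  have hmem' : u_star ∈ s := Set.right_mem_Icc.2 hu.le
  have hEderiv : ∀ u ∈ s, HasDerivWithinAt E 0 s u := by
    intro u hus
    have hVu := hpos u hus
    have hV : HasDerivWithinAt V (W u) s u := (hVdiff u hus).hasDerivWithinAt
    have hW : HasDerivWithinAt W (derivWithin W s u) s u :=
      (hWdiff u hus).hasDerivWithinAt
    have h1 : HasDerivWithinAt (fun x => W x ^ 2)
        ((2 : ℕ) * W u ^ 1 * derivWithin W s u) s u := hW.pow 2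
    have h2 : HasDerivWithinAt (fun x => c * (V x)⁻¹)
        (c * (-(W u) / V u ^ 2)) s u := (hV.inv hVu.ne').const_mul c
    have h3 : HasDerivWithinAt (fun x => V x ^ 2)
        ((2 : ℕ) * V u ^ 1 * W u) s u := hV.pow 2
    have hsum := (h1.add h2).add h3
    have hkey : (2 : ℕ) * W u ^ 1 * derivWithin W s u + c * (-(W u) / V u ^ 2)
        + (2 : ℕ) * V u ^ 1 * W u = 0 := by
      have hode' := hode u hus
      have hVne : V u ≠ 0 := hVu.ne'
      field_simp at hode' ⊢
      linear_combination W u * hode'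
    rw [hkey] at hsum
    exact hsum
  have hEdiff : DifferentiableOn ℝ E s := fun u hus =>
    (hEderiv u hus).differentiableWithinAt
  have hEzero : ∀ u ∈ Set.Ico (0:ℝ) u_star, derivWithin E s u = 0 := fun u hus =>
    (hEderiv u (Set.Ico_subset_Icc_self hus)).derivWithin (hs u (Set.Ico_subset_Icc_self hus))
  have hEconst : E u_star = E 0 :=
    constant_of_derivWithin_zero hEdiff hEzero u_star hmem'
  -- Strict monotonicity: V 0 < V u_star
  have hmono : StrictMonoOn V s := by
    apply strictMonoOn_of_deriv_pos (convex_Icc 0 u_star) (hC2.continuousOn)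
    intro x hx
    rw [interior_Icc] at hx
    have : derivWithin V s x = deriv V x :=
      derivWithin_of_mem_nhds (Icc_mem_nhds hx.1 hx.2)
    rw [← this]
    exact hincr x hx
  have hlt : V 0 < V u_star := hmono hmem hmem' hu
  -- Energy identity: c / V 0 + (V 0)^2 = c / V u_star + (V u_star)^2
  have hV0 := hpos 0 hmem
  have hV1 := hpos u_star hmem'
  have hEeq : c * (V 0)⁻¹ + V 0 ^ 2 = c * (V u_star)⁻¹ + V u_star ^ 2 := by
    have := hEconst
    simp only [hE_def, h0, h1] at this
    linarith [this]
  -- From the identity, c = V 0 * V u_star * (V 0 + V u_star)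
  have hcprod : c = V 0 * V u_star * (V 0 + V u_star) := by
    have hne0 : V 0 ≠ 0 := hV0.ne'
    have hne1 : V u_star ≠ 0 := hV1.ne'
    field_simp at hEeq
    nlinarith [hEeq, hlt, sub_pos.2 hlt]
  -- cube root comparisons
  have hm3 : ((c / 2) ^ ((1 : ℝ) / 3)) ^ (3 : ℕ) = c / 2 := by
    rw [← Real.rpow_natCast ((c / 2) ^ ((1:ℝ)/3)) 3, ← Real.rpow_mul (by positivity)]
    norm_num
  have hmpos : 0 < (c / 2) ^ ((1 : ℝ) / 3) := Real.rpow_pos_of_pos (by positivity) _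
  have hlow : V 0 ^ 3 < c / 2 := by
    rw [hcprod]
    nlinarith [mul_pos hV0 (mul_pos (sub_pos.2 hlt)
      (show (0:ℝ) < V u_star + 2 * V 0 by linarith))]
  have hhigh : c / 2 < V u_star ^ 3 := by
    rw [hcprod]
    nlinarith [mul_pos hV1 (mul_pos (sub_pos.2 hlt)
      (show (0:ℝ) < 2 * V u_star + V 0 by linarith))]
  constructor
  · by_contra h
    push_neg at h
    have := pow_le_pow_left₀ hmpos.le h 3
    rw [hm3] at this
    linarith [hlow, this]
  · by_contra h
    push_neg at h
    have := pow_le_pow_left₀ hV1.le h 3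
    rw [hm3] at this
    linarith [hhigh, this]
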